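/- Let X be a real Hausdorff locally convex topological vector space and let K be a nonempty convex compact metrizable subset of X. Then the set AExp(K) of affine exposed points of K is nonempty and K is the closed convex hull of its affine exposed points: K = closure(convexHull(AExp(K))). -/

import Mathlib

open scoped ENNReal RealInnerProductSpace
open TopologicalSpace
noncomputable section

lemma farthest_exposed {E : Type*} [NormedAddCommGroup E] [InnerProductSpace ℝ E]
    {C : Set E} {z y : E} (hfar : ∀ x ∈ C, ‖x - z‖ ≤ ‖y - z‖) (hyz : y ≠ z) :
    ∀ x ∈ C, x ≠ y → ⟪y - z, x⟫ < ⟪y - z, y⟫ := by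
  intro x hx hxy
  have hb : (0:ℝ) < ‖y - z‖ := by
    rw [norm_pos_iff]; exact sub_ne_zero_of_ne hyz
  have hself : ⟪y - z, y - z⟫ = ‖y - z‖ * ‖y - z‖ := by
    rw [real_inner_self_eq_norm_sq]; ring
  have key : ⟪y - z, x - z⟫ < ⟪y - z, y - z⟫ := by
    by_contra h
    push_neg at h
    have hcs : ⟪y - z, x - z⟫ ≤ ‖y - z‖ * ‖x - z‖ := real_inner_le_norm _ _
    have hge : ‖y - z‖ * ‖y - z‖ ≤ ‖y - z‖ * ‖x - z‖ := by linarith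
    have hle : ‖y - z‖ ≤ ‖x - z‖ := le_of_mul_le_mul_left hge hb
    have hne : ‖x - z‖ = ‖y - z‖ := le_antisymm (hfar x hx) hle
    have heq : ⟪y - z, x - z⟫ = ‖y - z‖ * ‖x - z‖ := by
      refine le_antisymm hcs ?_
      rw [hne]; linarith
    have h2 := inner_eq_norm_mul_iff_real.mp heq
    rw [hne] at h2
    have h3 : y - z = x - z := smul_right_injective E (ne_of_gt hb) h2
    have : y = x := by
      have := congrArg (fun w => w + z) h3
      simpa using this
    exact hxy this.symm
  have h1 : ⟪y - z, x⟫ = ⟪y - z, x - z⟫ + ⟪y - z, z⟫ := by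
    rw [← inner_add_right, sub_add_cancel]
  have h2 : ⟪y - z, y⟫ = ⟪y - z, y - z⟫ + ⟪y - z, z⟫ := by
    rw [← inner_add_right, sub_add_cancel]
  linarith


lemma straszewicz_far {E : Type*} [NormedAddCommGroup E] [InnerProductSpace ℝ E]
    [CompleteSpace E] {C D : Set E} (hC : IsCompact C) (hCne : C.Nonempty)
    (hD : IsClosed D) (hDconv : Convex ℝ D) (hDne : D.Nonempty)
    (hfar : ∀ z y, y ∈ C → (∀ x ∈ C, ‖x - z‖ ≤ ‖y - z‖) → y ≠ z → y ∈ D) :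
    C ⊆ D := by
  intro x hx
  by_contra hxD
  obtain ⟨f, β, hfD, hfx⟩ := geometric_hahn_banach_closed_point hDconv hD hxD
  set u : E := (InnerProductSpace.toDual ℝ E).symm f with hu
  have hfu : ∀ w : E, ⟪u, w⟫ = f w := fun w => InnerProductSpace.toDual_symm_apply
  obtain ⟨d₀, hd₀⟩ := hDne
  have hune : u ≠ 0 := by
    intro h0
    have h1 : f d₀ = 0 := by rw [← hfu]; simp [h0]
    have h2 : f x = 0 := by rw [← hfu]; simp [h0]
    linarith [hfD d₀ hd₀]
  have hunorm : (0:ℝ) < ‖u‖ := norm_pos_iff.mpr hune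
  -- bound on C
  obtain ⟨M, hM⟩ : ∃ M : ℝ, ∀ c ∈ C, ‖c - x‖ ≤ M := by
    obtain ⟨M, hM⟩ := (hC.image (continuous_id.sub continuous_const).norm).bddAbove
    exact ⟨M, fun c hc => hM (Set.mem_image_of_mem _ hc)⟩
  set δ : ℝ := f x - β with hδ
  have hδpos : 0 < δ := by simp [hδ]; linarith
  set t : ℝ := (M ^ 2 + 1) / (2 * δ) with ht
  have htpos : 0 < t := by
    apply div_pos _ (by linarith)
    nlinarith [sq_nonneg M]
  set z : E := x - t • u with hz
  obtain ⟨y, hyC, hymax⟩ := hC.exists_isMaxOn hCne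
    ((continuous_id.sub continuous_const).norm.continuousOn :
      ContinuousOn (fun w => ‖w - z‖) C)
  have hfary : ∀ c ∈ C, ‖c - z‖ ≤ ‖y - z‖ := fun c hc => hymax hc
  have hxz : ‖x - z‖ = t * ‖u‖ := by
    rw [hz]; simp [norm_smul, abs_of_pos htpos]
  have hyz : y ≠ z := by
    intro h
    have := hfary x hx
    rw [h, sub_self, norm_zero] at this
    have : t * ‖u‖ ≤ 0 := by rw [← hxz]; linarith [norm_nonneg (x - z)]
    nlinarith
  have hyD : y ∈ D := hfar z y hyC hfary hyz
  have hfy : f y < β := hfD y hyD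
  -- compute ‖y - z‖²
  have hexpand : ‖y - z‖ ^ 2 = ‖y - x‖ ^ 2 + 2 * t * (f y - f x) + t ^ 2 * ‖u‖ ^ 2 := by
    have : y - z = (y - x) + t • u := by rw [hz]; abel
    rw [this, norm_add_sq_real]
    have h1 : ⟪y - x, t • u⟫ = t * (f y - f x) := by
      rw [real_inner_smul_right, real_inner_comm, hfu, map_sub]
    have h2 : ‖t • u‖ ^ 2 = t ^ 2 * ‖u‖ ^ 2 := by
      rw [norm_smul]; simp [mul_pow, abs_of_pos htpos]
    rw [h1, h2]; ring
  have hMy : ‖y - x‖ ≤ M := hM y hyC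
  have hle : ‖y - z‖ ^ 2 < t ^ 2 * ‖u‖ ^ 2 := by
    have h1 : f y - f x < -δ := by simp [hδ]; linarith
    have h2 : 2 * t * δ = M ^ 2 + 1 := by
      rw [ht]; field_simp
    nlinarith [norm_nonneg (y - x), htpos]
  have hge : t * ‖u‖ ≤ ‖y - z‖ := by rw [← hxz]; exact hfary x hx
  have hsq : (t * ‖u‖) ^ 2 ≤ ‖y - z‖ ^ 2 := by
    nlinarith [mul_nonneg htpos.le (norm_nonneg u)]
  have : (t * ‖u‖) ^ 2 = t ^ 2 * ‖u‖ ^ 2 := by ring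
  linarith


lemma sep_seq {X : Type*} [AddCommGroup X] [Module ℝ X] [TopologicalSpace X]
    [IsTopologicalAddGroup X] [ContinuousSMul ℝ X] [LocallyConvexSpace ℝ X] [T2Space X]
    (K : Set X) (hcomp : IsCompact K) (hmetr : MetrizableSpace K) :
    ∃ g : ℕ → C(K, ℝ), (∀ n (x : K), |g n x| ≤ 1) ∧
      (∀ n, ∃ φ : X →L[ℝ] ℝ, ∀ x : K, g n x = φ x) ∧
      (∀ x y : K, x ≠ y → ∃ n, g n x ≠ g n y) := by
  haveI : CompactSpace K := isCompact_iff_compactSpace.mp hcomp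
  letI : MetricSpace K := metrizableSpaceMetric K
  set S : Set C(K, ℝ) :=
    {h | (∃ φ : X →L[ℝ] ℝ, ∀ x : K, h x = φ x) ∧ ∀ x : K, |h x| ≤ 1} with hS
  have hSne : S.Nonempty := ⟨0, ⟨0, fun x => by simp⟩, fun x => by simp⟩
  haveI : Nonempty ↥S := hSne.to_subtype
  obtain ⟨T, hTc, hTd⟩ := TopologicalSpace.exists_countable_dense ↥S
  have hTne : T.Nonempty := hTd.nonempty
  obtain ⟨g0, hg0⟩ := hTc.exists_eq_range hTne
  refine ⟨fun n => (g0 n : C(K, ℝ)), fun n x => (g0 n).2.2 x, fun n => (g0 n).2.1, ?_⟩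
  intro x y hxy
  obtain ⟨f, hf⟩ := geometric_hahn_banach_point_point
    (show (x : X) ≠ (y : X) from fun h => hxy (Subtype.ext h))
  -- bound |f| on K
  obtain ⟨M, hM⟩ : ∃ M : ℝ, ∀ w : K, |f w| ≤ M := by
    obtain ⟨M, hM⟩ := (hcomp.image (continuous_norm.comp f.continuous)).bddAbove
    exact ⟨M, fun w => hM (Set.mem_image_of_mem _ w.2)⟩
  have hM0 : 0 ≤ M := le_trans (abs_nonneg _) (hM x)
  set h : C(K, ℝ) := ⟨fun w => (M + 1)⁻¹ * f w,
    (continuous_const.mul (f.continuous.comp continuous_subtype_val))⟩ with hh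
  have hhS : h ∈ S := by
    refine ⟨⟨(M + 1)⁻¹ • f, fun w => by simp [hh]⟩, fun w => ?_⟩
    rw [hh]
    simp only [ContinuousMap.coe_mk, abs_mul]
    rw [abs_of_pos (inv_pos.mpr (by linarith : (0:ℝ) < M + 1))]
    calc (M + 1)⁻¹ * |f w| ≤ (M + 1)⁻¹ * (M + 1) := by
          apply mul_le_mul_of_nonneg_left _ (by positivity)
          linarith [hM w]
      _ = 1 := by field_simp
  set ε : ℝ := (h y - h x) / 3 with hε
  have hεpos : 0 < ε := by
    have : h x < h y := by
      rw [hh]; simp only [ContinuousMap.coe_mk]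
      apply mul_lt_mul_of_pos_left hf (inv_pos.mpr (by linarith))
    rw [hε]; linarith
  obtain ⟨t, htT, hdist⟩ := hTd.exists_dist_lt (⟨h, hhS⟩ : ↥S) hεpos
  rw [hg0] at htT
  obtain ⟨n, hn⟩ := htT
  refine ⟨n, ?_⟩
  have hdc : dist h (g0 n : C(K, ℝ)) < ε := by
    have : dist (⟨h, hhS⟩ : ↥S) (g0 n) < ε := by rw [hn]; exact hdist
    exact this
  have h1 : dist (h x) ((g0 n : C(K,ℝ)) x) < ε :=
    lt_of_le_of_lt (ContinuousMap.dist_apply_le_dist x) hdc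
  have h2 : dist (h y) ((g0 n : C(K,ℝ)) y) < ε :=
    lt_of_le_of_lt (ContinuousMap.dist_apply_le_dist y) hdc
  rw [Real.dist_eq] at h1 h2
  intro heq
  rw [heq] at h1
  have : h y - h x < 2 * ε := by
    cases' abs_lt.mp h1 with h1a h1b
    cases' abs_lt.mp h2 with h2a h2b
    linarith
  rw [hε] at this; linarith [hεpos]


local notation "E2" => lp (fun _ : ℕ => ℝ) 2

lemma ptoReal : ((2:ℝ≥0∞)).toReal = (2:ℝ) := by simp
lemma ptoRealpos : (0:ℝ) < ((2:ℝ≥0∞)).toReal := by rw [ptoReal]; norm_num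

lemma single_sub (n : ℕ) (a b : ℝ) :
    lp.single (E := fun _ : ℕ => ℝ) 2 n a - lp.single 2 n b = lp.single 2 n (a - b) := by
  apply lp.ext
  funext j
  by_cases h : j = n
  · subst h
    simp [lp.single_apply_self]
  · simp [lp.single_apply_ne _ _ _ h]

lemma single_cont (n : ℕ) : Continuous (fun r : ℝ => lp.single (E := fun _ : ℕ => ℝ) 2 n r) := by
  have h : ∀ r : ℝ, lp.single (E := fun _ : ℕ => ℝ) 2 n r = r • lp.single 2 n (1:ℝ) := by
    intro r
    rw [← lp.single_smul]
    norm_num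
  have h2 : (fun r : ℝ => lp.single (E := fun _ : ℕ => ℝ) 2 n r)
      = fun r : ℝ => r • lp.single 2 n (1:ℝ) := funext h
  rw [h2]
  exact continuous_id.smul continuous_const

lemma embed_cont {A : Type*} [TopologicalSpace A] (g : ℕ → C(A, ℝ))
    (hb : ∀ n (x : A), |g n x| ≤ 1) :
    ∃ j : A → E2, Continuous j ∧ ∀ (a : A) (n : ℕ), (j a : ℕ → ℝ) n = (2:ℝ)⁻¹ ^ (n+1) * g n a := by
  set c : ℕ → ℝ := fun n => (2:ℝ)⁻¹ ^ (n+1) with hc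
  have hcb : ∀ n, |c n| ≤ (2:ℝ)⁻¹ ^ n := by
    intro n
    rw [hc, abs_of_pos (by positivity)]
    exact pow_le_pow_of_le_one (by norm_num) (by norm_num) (by omega)
  -- coordinate bound
  have hcoordb : ∀ (a : A) (n : ℕ), |c n * g n a| ≤ (2:ℝ)⁻¹ ^ n := by
    intro a n
    rw [abs_mul]
    calc |c n| * |g n a| ≤ ((2:ℝ)⁻¹ ^ n) * 1 :=
        mul_le_mul (hcb n) (hb n a) (abs_nonneg _) (by positivity)
      _ = (2:ℝ)⁻¹ ^ n := mul_one _
  have hsq : ∀ (a : A) (n : ℕ), ‖c n * g n a‖ ^ ((2:ℝ≥0∞)).toReal ≤ (4:ℝ)⁻¹ ^ n := by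
    intro a n
    rw [ptoReal]
    have h1 : ‖c n * g n a‖ ^ (2:ℝ) = |c n * g n a| ^ (2:ℕ) := by
      rw [Real.norm_eq_abs, ← Real.rpow_natCast]
      norm_num
    rw [h1]
    have := hcoordb a n
    have h4 : ((2:ℝ)⁻¹ ^ n) ^ (2:ℕ) = (4:ℝ)⁻¹ ^ n := by
      rw [← pow_mul, mul_comm, pow_mul]
      norm_num
    calc |c n * g n a| ^ 2 ≤ ((2:ℝ)⁻¹ ^ n) ^ 2 := by
          apply pow_le_pow_left₀ (abs_nonneg _) this
      _ = (4:ℝ)⁻¹ ^ n := h4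
  have hgeom : Summable (fun n : ℕ => (4:ℝ)⁻¹ ^ n) :=
    summable_geometric_of_lt_one (by norm_num) (by norm_num)
  have hmem : ∀ a : A, Memℓp (fun n => c n * g n a) 2 := by
    intro a
    apply memℓp_gen
    apply Summable.of_nonneg_of_le (fun n => by positivity) (hsq a) hgeom
  refine ⟨fun a => ⟨fun n => c n * g n a, hmem a⟩, ?_, fun a n => rfl⟩
  -- continuity via uniform approximation
  set j : A → E2 := fun a => ⟨fun n => c n * g n a, hmem a⟩ with hj
  set F : ℕ → A → E2 := fun N a => ∑ n ∈ Finset.range N, lp.single 2 n ((j a : ℕ → ℝ) n) with hF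
  have hFcont : ∀ N, Continuous (F N) := by
    intro N
    apply continuous_finset_sum
    intro n _
    exact (single_cont n).comp (continuous_const.mul (g n).continuous)
  have hdist : ∀ (N : ℕ) (a : A), dist (j a) (F N a) ≤ 2 * (2:ℝ)⁻¹ ^ N := by
    intro N a
    have key := lp.norm_compl_sum_single ptoRealpos (j a) (Finset.range N)
    have hnorm := lp.hasSum_norm ptoRealpos (j a)
    have hsummable : Summable (fun n => ‖(j a : ℕ → ℝ) n‖ ^ ((2:ℝ≥0∞)).toReal) := hnorm.summable
    have htsum : ‖j a‖ ^ ((2:ℝ≥0∞)).toReal = ∑' n, ‖(j a : ℕ → ℝ) n‖ ^ ((2:ℝ≥0∞)).toReal :=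
      hnorm.tsum_eq.symm
    have hsplit := hsummable.sum_add_tsum_nat_add N
    -- tail bound
    have htail : (∑' k, ‖(j a : ℕ → ℝ) (k + N)‖ ^ ((2:ℝ≥0∞)).toReal) ≤ 2 * (4:ℝ)⁻¹ ^ N := by
      have h1 : (∑' k, ‖(j a : ℕ → ℝ) (k + N)‖ ^ ((2:ℝ≥0∞)).toReal) ≤
          ∑' k, (4:ℝ)⁻¹ ^ (k + N) := by
        apply Summable.tsum_le_tsum (fun k => hsq a (k + N)) (by
          apply (summable_nat_add_iff N).mpr hsummable)
          ((summable_nat_add_iff N).mpr hgeom)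
      have h2 : (∑' k : ℕ, (4:ℝ)⁻¹ ^ (k + N)) = (4:ℝ)⁻¹ ^ N * ∑' k : ℕ, (4:ℝ)⁻¹ ^ k := by
        rw [← tsum_mul_left]
        congr 1
        funext k
        rw [pow_add]; ring
      have h3 : (∑' k : ℕ, (4:ℝ)⁻¹ ^ k) = (1 - (4:ℝ)⁻¹)⁻¹ := tsum_geometric_of_lt_one (by norm_num) (by norm_num)
      rw [h2, h3] at h1
      calc (∑' k, ‖(j a : ℕ → ℝ) (k + N)‖ ^ ((2:ℝ≥0∞)).toReal) ≤ (4:ℝ)⁻¹ ^ N * (1 - (4:ℝ)⁻¹)⁻¹ := h1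
        _ ≤ 2 * (4:ℝ)⁻¹ ^ N := by
            rw [mul_comm]
            apply mul_le_mul_of_nonneg_right (by norm_num) (by positivity)
    have hfinal : ‖j a - F N a‖ ^ ((2:ℝ≥0∞)).toReal ≤ 2 * (4:ℝ)⁻¹ ^ N := by
      rw [hF]
      calc ‖j a - ∑ n ∈ Finset.range N, lp.single 2 n ((j a : ℕ → ℝ) n)‖ ^ ((2:ℝ≥0∞)).toReal
          = ‖j a‖ ^ ((2:ℝ≥0∞)).toReal - ∑ n ∈ Finset.range N, ‖(j a : ℕ → ℝ) n‖ ^ ((2:ℝ≥0∞)).toReal := key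
        _ = ∑' k, ‖(j a : ℕ → ℝ) (k + N)‖ ^ ((2:ℝ≥0∞)).toReal := by
            rw [htsum, ← hsplit]; ring
        _ ≤ 2 * (4:ℝ)⁻¹ ^ N := htail
    rw [dist_eq_norm]
    rw [ptoReal] at hfinal
    have h5 : ‖j a - F N a‖ ^ (2:ℝ) = ‖j a - F N a‖ ^ (2:ℕ) := by
      rw [← Real.rpow_natCast]; norm_num
    rw [h5] at hfinal
    have h6 : (2 * (2:ℝ)⁻¹ ^ N) ^ (2:ℕ) = 4 * (4:ℝ)⁻¹ ^ N := by
      rw [mul_pow, ← pow_mul, mul_comm N 2, pow_mul]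
      norm_num
    nlinarith [norm_nonneg (j a - F N a), pow_nonneg (by norm_num : (0:ℝ) ≤ (2:ℝ)⁻¹) N,
      pow_nonneg (by norm_num : (0:ℝ) ≤ (4:ℝ)⁻¹) N]
  have huc : TendstoUniformly F j Filter.atTop := by
    rw [Metric.tendstoUniformly_iff]
    intro ε hε
    obtain ⟨N₀, hN₀⟩ : ∃ N₀ : ℕ, 2 * (2:ℝ)⁻¹ ^ N₀ < ε := by
      obtain ⟨N₀, hN₀⟩ := exists_pow_lt_of_lt_one (by linarith : (0:ℝ) < ε / 2) (by norm_num : (2:ℝ)⁻¹ < 1)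
      exact ⟨N₀, by linarith⟩
    filter_upwards [Filter.eventually_ge_atTop N₀] with N hN a
    have : 2 * (2:ℝ)⁻¹ ^ N ≤ 2 * (2:ℝ)⁻¹ ^ N₀ := by
      apply mul_le_mul_of_nonneg_left _ (by norm_num)
      apply pow_le_pow_of_le_one (by norm_num) (by norm_num) hN
    calc dist (j a) (F N a) ≤ 2 * (2:ℝ)⁻¹ ^ N := hdist N a
      _ ≤ 2 * (2:ℝ)⁻¹ ^ N₀ := this
      _ < ε := hN₀
  exact huc.continuous (Filter.Frequently.of_forall hFcont)


set_option maxHeartbeats 1000000 in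
/-- **Krein–Milman theorem with affine exposed points.** Let `X` be a real Hausdorff locally
convex space and `K` a nonempty convex compact metrizable subset of `X`. Then the set of
affine exposed points of `K` (points at which some continuous affine map `τ : K → ℝ` attains
a strict maximum over `K`) is nonempty and `K` is the closed convex hull of this set. -/
theorem stmt_11 {X : Type*} [AddCommGroup X] [Module ℝ X] [TopologicalSpace X]
    [IsTopologicalAddGroup X] [ContinuousSMul ℝ X] [LocallyConvexSpace ℝ X] [T2Space X]
    (K : Set X) (hne : K.Nonempty) (hconv : Convex ℝ K) (hcomp : IsCompact K)
    (hmetr : TopologicalSpace.MetrizableSpace K)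
    (AExp : Set X)
    (hAExp : AExp = {x : X | ∃ hx : x ∈ K, ∃ τ : K → ℝ, Continuous τ ∧
      (∀ (a b : X) (ha : a ∈ K) (hb : b ∈ K) (l : ℝ), 0 ≤ l → l ≤ 1 →
        ∀ hm : l • a + (1 - l) • b ∈ K,
          τ ⟨l • a + (1 - l) • b, hm⟩ = l * τ ⟨a, ha⟩ + (1 - l) * τ ⟨b, hb⟩) ∧
      (∀ y : X, ∀ hy : y ∈ K, y ≠ x → τ ⟨y, hy⟩ < τ ⟨x, hx⟩)}) :
    AExp.Nonempty ∧ K = closure (convexHull ℝ AExp) := by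
  classical
  have hAExpK : AExp ⊆ K := by
    intro x hx
    rw [hAExp] at hx
    exact hx.1
  -- trivial case: K is a subsingleton
  by_cases hsub : ∀ p ∈ K, ∀ q ∈ K, p = q
  · obtain ⟨x₀, hx₀⟩ := hne
    have hx₀A : x₀ ∈ AExp := by
      rw [hAExp]
      refine ⟨hx₀, fun _ => 0, continuous_const, fun a b ha hb l hl0 hl1 hm => by ring, ?_⟩
      intro y hy hne'
      exact absurd (hsub y hy x₀ hx₀) hne'
    have hKsing : K = {x₀} := by
      apply Set.eq_singleton_iff_unique_mem.mpr
      exact ⟨hx₀, fun p hp => hsub p hp x₀ hx₀⟩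
    have hAsing : AExp = {x₀} := by
      apply Set.eq_singleton_iff_unique_mem.mpr
      refine ⟨hx₀A, fun p hp => ?_⟩
      have := hAExpK hp
      rw [hKsing] at this
      exact this
    refine ⟨⟨x₀, hx₀A⟩, ?_⟩
    rw [hAsing, convexHull_singleton, closure_singleton, hKsing]
  · push_neg at hsub
    obtain ⟨p, hp, q, hq, hpq⟩ := hsub
    haveI : CompactSpace ↥K := isCompact_iff_compactSpace.mp hcomp
    -- separating sequence of affine continuous functions
    obtain ⟨g, hgb, hgφ, hgsep⟩ := sep_seq K hcomp hmetr
    -- the embedding into ℓ²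
    obtain ⟨j, hjcont, hjcoord⟩ := embed_cont g hgb
    -- injectivity
    have hjinj : Function.Injective j := by
      intro x y hxy
      by_contra hne'
      obtain ⟨n, hn⟩ := hgsep x y hne'
      apply hn
      have := congrArg (fun f : lp (fun _ : ℕ => ℝ) 2 => (f : ℕ → ℝ) n) hxy
      simp only at this
      rw [hjcoord x n, hjcoord y n] at this
      have hc0 : (2:ℝ)⁻¹ ^ (n+1) ≠ 0 := by positivity
      exact mul_left_cancel₀ hc0 this
    -- affineness of j
    have hjaff : ∀ (a b : ↥K) (l : ℝ), 0 ≤ l → l ≤ 1 →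
        ∀ hm : l • (a : X) + (1 - l) • (b : X) ∈ K,
        j ⟨l • (a : X) + (1 - l) • (b : X), hm⟩ = l • j a + (1 - l) • j b := by
      intro a b l hl0 hl1 hm
      apply lp.ext
      funext n
      obtain ⟨φ, hφ⟩ := hgφ n
      have hL : (j ⟨l • (a : X) + (1 - l) • (b : X), hm⟩ : ℕ → ℝ) n
          = (2:ℝ)⁻¹ ^ (n+1) * g n ⟨l • (a : X) + (1 - l) • (b : X), hm⟩ := hjcoord _ n
      have hR : ((l • j a + (1 - l) • j b : lp (fun _ : ℕ => ℝ) 2) : ℕ → ℝ) n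
          = l * (j a : ℕ → ℝ) n + (1 - l) * (j b : ℕ → ℝ) n := by
        rw [lp.coeFn_add, lp.coeFn_smul, lp.coeFn_smul]
        simp
      show (j ⟨l • (a : X) + (1 - l) • (b : X), hm⟩ : ℕ → ℝ) n
          = ((l • j a + (1 - l) • j b : lp (fun _ : ℕ => ℝ) 2) : ℕ → ℝ) n
      rw [hL, hR, hjcoord a n, hjcoord b n, hφ, hφ, hφ]
      simp only [map_add, map_smul, smul_eq_mul]
      ring
    -- the compact convex image
    set C : Set (lp (fun _ : ℕ => ℝ) 2) := Set.range j with hC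
    have hCcomp : IsCompact C := isCompact_range hjcont
    have hCne : C.Nonempty := ⟨j ⟨p, hp⟩, Set.mem_range_self _⟩
    -- farthest points give affine exposed points
    have expose : ∀ (z y : lp (fun _ : ℕ => ℝ) 2), y ∈ C →
        (∀ x ∈ C, ‖x - z‖ ≤ ‖y - z‖) → y ≠ z →
        ∃ x₀ : ↥K, j x₀ = y ∧ (x₀ : X) ∈ AExp := by
      intro z y hyC hfarthest hyz
      obtain ⟨x₀, hx₀⟩ := hyC
      refine ⟨x₀, hx₀, ?_⟩
      rw [hAExp]
      refine ⟨x₀.2, fun w => ⟪y - z, j w⟫, (continuous_const.inner hjcont), ?_, ?_⟩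
      · intro a b ha hb l hl0 hl1 hm
        have haff : j (⟨l • a + (1 - l) • b, hm⟩ : ↥K)
            = l • j ⟨a, ha⟩ + (1 - l) • j ⟨b, hb⟩ := hjaff ⟨a, ha⟩ ⟨b, hb⟩ l hl0 hl1 hm
        show ⟪y - z, j ⟨l • a + (1 - l) • b, hm⟩⟫
            = l * ⟪y - z, j ⟨a, ha⟩⟫ + (1 - l) * ⟪y - z, j ⟨b, hb⟩⟫
        rw [haff, inner_add_right, real_inner_smul_right, real_inner_smul_right]
      · intro w hw hne'
        have h1 : j ⟨w, hw⟩ ≠ y := by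
          rw [← hx₀]
          intro h
          exact hne' (congrArg Subtype.val (hjinj h))
        have h2 := farthest_exposed hfarthest hyz (j ⟨w, hw⟩) (Set.mem_range_self _) h1
        have h3 : j ⟨(x₀ : X), x₀.2⟩ = y := by rw [← hx₀]
        show ⟪y - z, j ⟨w, hw⟩⟫ < ⟪y - z, j ⟨(x₀ : X), x₀.2⟩⟫
        rw [h3]
        exact h2
    -- nonemptiness of AExp
    obtain ⟨y₁, hy₁C, hy₁max⟩ := hCcomp.exists_isMaxOn hCne
      ((continuous_id.sub continuous_const).norm.continuousOn :
        ContinuousOn (fun w => ‖w - j ⟨p, hp⟩‖) C)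
    have hy₁far : ∀ x ∈ C, ‖x - j ⟨p, hp⟩‖ ≤ ‖y₁ - j ⟨p, hp⟩‖ := fun x hx => hy₁max hx
    have hy₁ne : y₁ ≠ j ⟨p, hp⟩ := by
      intro h
      have h1 : j ⟨q, hq⟩ ≠ j ⟨p, hp⟩ := by
        intro h2
        exact hpq (congrArg Subtype.val (hjinj h2)).symm
      have h2 := hy₁far (j ⟨q, hq⟩) (Set.mem_range_self _)
      rw [h, sub_self, norm_zero] at h2
      have h3 : j ⟨q, hq⟩ - j ⟨p, hp⟩ ≠ 0 := sub_ne_zero_of_ne h1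
      have h4 : 0 < ‖j ⟨q, hq⟩ - j ⟨p, hp⟩‖ := norm_pos_iff.mpr h3
      linarith
    obtain ⟨x₁, hx₁j, hx₁A⟩ := expose (j ⟨p, hp⟩) y₁ hy₁C hy₁far hy₁ne
    have hAne : AExp.Nonempty := ⟨x₁, hx₁A⟩
    refine ⟨hAne, ?_⟩
    -- the closed convex hull
    set D' : Set X := closure (convexHull ℝ AExp) with hD'
    have hD'K : D' ⊆ K :=
      closure_minimal (convexHull_min hAExpK hconv) hcomp.isClosed
    have hD'conv : Convex ℝ D' := (convex_convexHull ℝ AExp).closure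
    have hAD' : AExp ⊆ D' := subset_closure.trans' (subset_convexHull ℝ AExp)
    set D : Set (lp (fun _ : ℕ => ℝ) 2) := j '' {x : ↥K | (x : X) ∈ D'} with hD
    have hDcomp : IsCompact D := by
      apply IsCompact.image _ hjcont
      exact (IsClosed.preimage continuous_subtype_val (isClosed_closure)).isCompact
    have hDclosed : IsClosed D := hDcomp.isClosed
    have hDconv : Convex ℝ D := by
      rintro u ⟨xa, hxa, rfl⟩ v ⟨xb, hxb, rfl⟩ a b ha hb hab
      have hb1 : b = 1 - a := by linarith
      have hm : a • (xa : X) + (1 - a) • (xb : X) ∈ K :=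
        hconv xa.2 xb.2 ha (by linarith) (by ring)
      have := hjaff xa xb a ha (by linarith) hm
      refine ⟨⟨a • (xa : X) + (1 - a) • (xb : X), hm⟩, ?_, ?_⟩
      · exact hD'conv hxa hxb ha (by linarith) (by ring)
      · rw [this, hb1]
    have hDne : D.Nonempty := ⟨j x₁, ⟨x₁, hAD' hx₁A, rfl⟩⟩
    have hCD : C ⊆ D := by
      apply straszewicz_far hCcomp hCne hDclosed hDconv hDne
      intro z y hyC hfarthest hyz
      obtain ⟨x₀, hx₀j, hx₀A⟩ := expose z y hyC hfarthest hyz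
      exact ⟨x₀, hAD' hx₀A, hx₀j⟩
    apply le_antisymm
    · intro x hx
      have : j ⟨x, hx⟩ ∈ D := hCD (Set.mem_range_self _)
      obtain ⟨x₂, hx₂D', hx₂j⟩ := this
      have : x₂ = ⟨x, hx⟩ := hjinj hx₂j
      rw [this] at hx₂D'
      exact hx₂D'
    · exact hD'K

end
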